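/- For all integers s ≥ 1 and k ≥ 2, A(s,k) ≤ s + (k−1)·⌈s^{1/(k−1)}⌉^{k−2}, where ⌈s^{1/(k−1)}⌉ is the least integer σ with σ^{k−1} ≥ s. (This is achieved by the cubic construction, which arranges the s information bits in a (k−1)-dimensional cube of side σ and adds, for each of the k−1 axis directions, all σ^{k−2} parity sums along lines in that direction.) -/

import Mathlib

/-- An `s × m` matrix `G` over `F_2` has property `A_k` if for every `i` there exist
`k` pairwise disjoint subsets of the columns of `G` such that the columns in each
subset sum to the standard basis vector `e_i`. -/
def hasPropertyA (s m k : ℕ) (G : Matrix (Fin s) (Fin m) (ZMod 2)) : Prop :=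
  ∀ i : Fin s, ∃ R : Fin k → Finset (Fin m),
    (∀ j j' : Fin k, j ≠ j' → Disjoint (R j) (R j')) ∧
    ∀ j : Fin k, ∀ r : Fin s, (∑ c ∈ R j, G r c) = if r = i then 1 else 0

/-- `PIRlen s k` = `A(s,k)`: the smallest `m` such that an `s × m` matrix over `F_2`
with property `A_k` exists. -/
noncomputable def PIRlen (s k : ℕ) : ℕ :=
  sInf {m : ℕ | ∃ G : Matrix (Fin s) (Fin m) (ZMod 2), hasPropertyA s m k G}

/- ### Auxiliary material for the cubic construction -/

/-- Coordinates of a point along a line: delete coordinate `d`. -/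
def lineCoords {u σ : ℕ} (d : Fin (u + 1)) (f : Fin (u + 1) → Fin σ) : Fin u → Fin σ :=
  fun j => f (d.succAbove j)

lemma lineCoords_eq_iff {u σ : ℕ} {d : Fin (u + 1)} {f g : Fin (u + 1) → Fin σ} :
    lineCoords d f = lineCoords d g ↔ ∀ j, j ≠ d → f j = g j := by
  constructor
  · intro h j hj
    obtain ⟨z, rfl⟩ := Fin.exists_succAbove_eq hj
    exact congrFun h z
  · intro h
    funext z
    exact h _ (Fin.succAbove_ne d z)

/-- Embedding of the `s` information bits into the `(u+1)`-dimensional cube of side `σ`. -/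
noncomputable def cubeEmb (s u σ : ℕ) (hle : s ≤ σ ^ (u + 1)) :
    Fin s → (Fin (u + 1) → Fin σ) :=
  fun j => finFunctionFinEquiv.symm (Fin.castLE hle j)

lemma cubeEmb_injective (s u σ : ℕ) (hle : s ≤ σ ^ (u + 1)) :
    Function.Injective (cubeEmb s u σ hle) := by
  intro a b h
  have h2 : Fin.castLE hle a = Fin.castLE hle b := finFunctionFinEquiv.symm.injective h
  exact Fin.castLE_injective hle h2

/-- The generator matrix of the cubic construction, with columns indexed by
`Fin s ⊕ (Fin (u+1) × (Fin u → Fin σ))` : identity columns plus one parity column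
for each axis-parallel line of the cube. -/
noncomputable def cubeG (s u σ : ℕ) (hle : s ≤ σ ^ (u + 1)) :
    Fin s → (Fin s ⊕ Fin (u + 1) × (Fin u → Fin σ)) → ZMod 2 :=
  fun r => Sum.elim (fun j => if r = j then 1 else 0)
    (fun p => if lineCoords p.1 (cubeEmb s u σ hle r) = p.2 then 1 else 0)

lemma cubic_exists (s u σ : ℕ) (hle : s ≤ σ ^ (u + 1)) :
    ∃ G : Matrix (Fin s) (Fin (s + (u + 1) * σ ^ u)) (ZMod 2),
      hasPropertyA s (s + (u + 1) * σ ^ u) (u + 2) G := by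
  classical
  set e := cubeEmb s u σ hle with he
  have einj := cubeEmb_injective s u σ hle
  set G0 := cubeG s u σ hle with hG0
  let ec : (Fin s ⊕ Fin (u + 1) × (Fin u → Fin σ)) ≃ Fin (s + (u + 1) * σ ^ u) :=
    (Equiv.sumCongr (Equiv.refl _)
      ((Equiv.prodCongr (Equiv.refl _) finFunctionFinEquiv).trans finProdFinEquiv)).trans
      finSumFinEquiv
  refine ⟨fun r c => G0 r (ec.symm c), ?_⟩
  intro i
  let S : Fin (u + 1) → Finset (Fin s) := fun d =>
    Finset.univ.filter (fun j => lineCoords d (e j) = lineCoords d (e i) ∧ j ≠ i)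
  let R0 : Fin (u + 2) → Finset (Fin s ⊕ Fin (u + 1) × (Fin u → Fin σ)) :=
    Fin.cases {Sum.inl i}
      (fun d => insert (Sum.inr (d, lineCoords d (e i))) ((S d).image Sum.inl))
  have hmemS : ∀ d r, r ∈ S d ↔ (lineCoords d (e r) = lineCoords d (e i) ∧ r ≠ i) := by
    intro d r; simp [S]
  -- zero-vs-succ disjointness
  have hd0 : ∀ d : Fin (u + 1),
      Disjoint ({Sum.inl i} : Finset (Fin s ⊕ Fin (u + 1) × (Fin u → Fin σ)))
        (insert (Sum.inr (d, lineCoords d (e i))) ((S d).image Sum.inl)) := by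
    intro d
    rw [Finset.disjoint_singleton_left]
    simp only [Finset.mem_insert, Finset.mem_image, not_or, not_exists]
    refine ⟨by simp, ?_⟩
    rintro a ⟨ha, hai⟩
    exact ((hmemS d a).1 ha).2 (Sum.inl_injective hai)
  have hdisj : ∀ j j' : Fin (u + 2), j ≠ j' → Disjoint (R0 j) (R0 j') := by
    intro j j' hjj'
    induction j using Fin.cases with
    | zero =>
      induction j' using Fin.cases with
      | zero => exact absurd rfl hjj'
      | succ d =>
        simp only [R0, Fin.cases_zero, Fin.cases_succ]
        exact hd0 d
    | succ d =>
      induction j' using Fin.cases with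
      | zero =>
        simp only [R0, Fin.cases_zero, Fin.cases_succ]
        exact (hd0 d).symm
      | succ d' =>
        have hdd : d ≠ d' := fun h => hjj' (by rw [h])
        simp only [R0, Fin.cases_succ]
        rw [Finset.disjoint_left]
        rintro x hx hx'
        simp only [Finset.mem_insert, Finset.mem_image] at hx hx'
        rcases hx with rfl | ⟨a, ha, rfl⟩
        · rcases hx' with h | ⟨a, ha, h⟩
          · exact hdd (congrArg Prod.fst (Sum.inr_injective h))
          · cases h
        · rcases hx' with h | ⟨b, hb, hba⟩
          · cases h
          · have hb' : a ∈ S d' := by rwa [Sum.inl_injective hba] at hb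
            obtain ⟨h1, hai⟩ := (hmemS d a).1 ha
            obtain ⟨h2, -⟩ := (hmemS d' a).1 hb'
            have hfa := lineCoords_eq_iff.1 h1
            have hfb := lineCoords_eq_iff.1 h2
            have heq : e a = e i := by
              funext c
              by_cases hc : c = d
              · exact hfb c (by rw [hc]; exact hdd)
              · exact hfa c hc
            exact hai (einj heq)
  have hsum : ∀ j : Fin (u + 2), ∀ r : Fin s,
      (∑ c ∈ R0 j, G0 r c) = if r = i then 1 else 0 := by
    intro j r
    induction j using Fin.cases with
    | zero =>
      simp only [R0, Fin.cases_zero, Finset.sum_singleton, hG0, cubeG, Sum.elim_inl]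
    | succ d =>
      simp only [R0, Fin.cases_succ]
      have hnot : (Sum.inr (d, lineCoords d (e i)) :
          Fin s ⊕ Fin (u + 1) × (Fin u → Fin σ)) ∉ (S d).image Sum.inl := by
        simp
      rw [Finset.sum_insert hnot,
        Finset.sum_image (fun a _ b _ h => Sum.inl_injective h)]
      have h1 : (∑ a ∈ S d, G0 r (Sum.inl a)) = if r ∈ S d then 1 else 0 := by
        simp only [hG0, cubeG, Sum.elim_inl]
        rw [Finset.sum_ite_eq]
      rw [h1]
      simp only [hG0, cubeG, Sum.elim_inr, hmemS]
      by_cases hri : r = i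
      · subst hri; simp [he]
      · by_cases hl : lineCoords d (e r) = lineCoords d (e i)
        · simp only [he] at hl ⊢
          rw [if_pos hl, if_pos ⟨hl, hri⟩, if_neg hri]
          decide
        · simp only [he] at hl ⊢
          rw [if_neg hl, if_neg (fun h => hl h.1), if_neg hri]
          decide
  refine ⟨fun j => (R0 j).map ⟨ec, ec.injective⟩, ?_, ?_⟩
  · intro j j' h
    exact (Finset.disjoint_map _).mpr (hdisj j j' h)
  · intro j r
    rw [Finset.sum_map]
    simpa using hsum j r

/-- The cubic construction: `A(s,k) ≤ s + (k−1)·σ^{k−2}` where `σ = ⌈s^{1/(k−1)}⌉`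
is the least integer with `σ^{k−1} ≥ s`. -/
theorem pir_cubic (s k : ℕ) (hs : 1 ≤ s) (hk : 2 ≤ k) :
    PIRlen s k ≤ s + (k - 1) * (sInf {σ : ℕ | s ≤ σ ^ (k - 1)}) ^ (k - 2) := by
  obtain ⟨u, rfl⟩ : ∃ u, k = u + 2 := ⟨k - 2, by omega⟩
  have h1 : u + 2 - 1 = u + 1 := rfl
  have h2 : u + 2 - 2 = u := rfl
  simp only [h1, h2]
  set σ := sInf {σ : ℕ | s ≤ σ ^ (u + 1)} with hσ
  have hne : {σ : ℕ | s ≤ σ ^ (u + 1)}.Nonempty :=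
    ⟨s, Nat.le_self_pow (by omega) s⟩
  have hle : s ≤ σ ^ (u + 1) := Nat.sInf_mem hne
  obtain ⟨G, hG⟩ := cubic_exists s u σ hle
  exact Nat.sInf_le ⟨G, hG⟩
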